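/- (Double centralizer theorem over local rings, type A instance.) Let R be a commutative local ring, let n ≥ 3, and let g ∈ SL_n(R). Suppose that g commutes with every transvection t_{kl}(1) = 1 + E_{kl} with k ≠ l, k ≠ 2 and l ≠ 1 (indices 1-based). Then there exist ω ∈ R and r ∈ R with ω^n = 1 such that g = ω • (1 + r • E_{12}). -/

import Mathlib

open Matrix

/-- Double centralizer theorem over a commutative local ring, type A instance: if
`g ∈ SL_n(R)` (`n ≥ 3`) commutes with all elementary transvections `t_{kl}(1) = 1 + E_{kl}`
with `k ≠ l`, `k ≠ 2`, `l ≠ 1` (1-based indices), then `g = ω • t_{12}(r)` for some scalar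
`ω` with `ω^n = 1` and some `r ∈ R`. -/
theorem double_centralizer_local_typeA {R : Type*} [CommRing R] [IsLocalRing R] {n : ℕ}
    (hn : 3 ≤ n) (g : Matrix.SpecialLinearGroup (Fin n) R)
    (hg : ∀ k l : Fin n, k ≠ l → k ≠ ⟨1, by omega⟩ → l ≠ ⟨0, by omega⟩ →
      (g : Matrix (Fin n) (Fin n) R) * (1 + Matrix.single k l 1) =
        (1 + Matrix.single k l 1) * (g : Matrix (Fin n) (Fin n) R)) :
    ∃ ω r : R, ω ^ n = 1 ∧
      (g : Matrix (Fin n) (Fin n) R) =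
        ω • (1 + r • Matrix.single (⟨0, by omega⟩ : Fin n) (⟨1, by omega⟩ : Fin n) 1) := by
  set G : Matrix (Fin n) (Fin n) R := (g : Matrix (Fin n) (Fin n) R) with hGdef
  set i0 : Fin n := ⟨0, by omega⟩ with hi0
  set i1 : Fin n := ⟨1, by omega⟩ with hi1
  set i2 : Fin n := ⟨2, by omega⟩ with hi2
  have h01 : i0 ≠ i1 := Fin.ne_of_val_ne (by simp [hi0, hi1])
  have key : ∀ k l : Fin n, k ≠ l → k ≠ i1 → l ≠ i0 →
      G * Matrix.single k l 1 = Matrix.single k l 1 * G := by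
    intro k l h1 h2 h3
    have h := hg k l h1 h2 h3
    rw [mul_add, add_mul, mul_one, one_mul] at h
    exact add_left_cancel h
  -- column fact
  have fact1 : ∀ a k : Fin n, a ≠ k → k ≠ i1 → G a k = 0 := by
    intro a k hak hk1
    have hk := key k i1 hk1 hk1 h01.symm
    have h := congrFun (congrFun hk a) i1
    rw [Matrix.mul_single_apply_same,
      Matrix.single_mul_apply_of_ne (h := hak)] at h
    simpa using h
  -- row fact
  have fact2 : ∀ l b : Fin n, l ≠ b → l ≠ i0 → G l b = 0 := by
    intro l b hlb hl0
    set k : Fin n := if l = i2 then i0 else i2 with hk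
    have hk1 : k ≠ i1 := by
      rw [hk]; split <;> exact Fin.ne_of_val_ne (by simp [hi0, hi1, hi2])
    have hkl : k ≠ l := by
      rw [hk]; split
      · rename_i h; rw [h]; exact Fin.ne_of_val_ne (by simp [hi0, hi2])
      · rename_i h; exact fun hh => h hh.symm
    have hc := key k l hkl hk1 hl0
    have h := congrFun (congrFun hc k) b
    rw [Matrix.mul_single_apply_of_ne (hbj := fun hh => hlb hh.symm),
      Matrix.single_mul_apply_same] at h
    simpa using h.symm
  -- diagonal fact
  have fact3 : ∀ d : Fin n, d ≠ i0 → G d d = G i0 i0 := by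
    intro d hd
    have h10 : i0 ≠ i1 := h01
    have hc := key i0 d (fun hh => hd hh.symm) h01 hd
    have h := congrFun (congrFun hc i0) d
    rw [Matrix.mul_single_apply_same,
      Matrix.single_mul_apply_same] at h
    simpa using h.symm
  set ω : R := G i0 i0 with hω
  have hbt : G.BlockTriangular id := by
    intro i j hij
    have hij' : (j : ℕ) < (i : ℕ) := hij
    exact fact2 i j (Fin.ne_of_val_ne (by omega)) (Fin.ne_of_val_ne (by simp [hi0]; omega))
  have hdiag : ∀ d : Fin n, G d d = ω := by
    intro d
    by_cases hd : d = i0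
    · rw [hd]
    · exact fact3 d hd
  have hdet : G.det = 1 := g.property
  have hωn : ω ^ n = 1 := by
    rw [Matrix.det_of_upperTriangular hbt] at hdet
    calc ω ^ n = ∏ _i : Fin n, ω := by simp
    _ = ∏ i : Fin n, G i i := Finset.prod_congr rfl (fun i _ => (hdiag i).symm)
    _ = 1 := hdet
  refine ⟨ω, G i0 i1 * ω ^ (n - 1), hωn, ?_⟩
  ext a b
  by_cases hab : a = b
  · subst hab
    have : ¬(i0 = a ∧ i1 = a) := by rintro ⟨h1, h2⟩; exact h01 (h1.trans h2.symm)
    simp [Matrix.single, this, hdiag a]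
  · by_cases ha : a = i0
    · subst ha
      by_cases hb : b = i1
      · subst hb
        have hpow : ω * ω ^ (n - 1) = 1 := by
          rw [← pow_succ', show n - 1 + 1 = n by omega, hωn]
        simp only [Matrix.smul_apply, Matrix.add_apply, Matrix.one_apply_ne h01,
          Matrix.smul_apply, Matrix.single, Matrix.of_apply, and_self, if_true,
          eq_self_iff_true, smul_eq_mul, mul_one, zero_add]
        linear_combination (-(G i0 i1)) * hpow
      · rw [fact1 i0 b hab hb]
        simp [Matrix.single, Matrix.one_apply_ne hab,
          show i1 ≠ b from fun h => hb h.symm]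
    · have h0 : ¬(i0 = a ∧ i1 = b) := by rintro ⟨h1, -⟩; exact ha h1.symm
      rw [fact2 a b hab ha]
      simp [Matrix.single, h0, hab]
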